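/- Consider the conditions: (1) C is normal; (2) for all distinct maximal elements p,q of C there exist compact a,b ∈ C with a ≰ p, b ≰ q and [a,b] = ⊥; (3) any two distinct maximal elements have disjoint neighbourhoods in Spec(C) with the Zariski topology; (4) every prime element of C lies below a unique maximal element. Then (1) implies (2), (2) implies (3), and (3) implies (4); moreover, if C satisfies condition (⋆), then (4) implies (1). -/

import Mathlib

open CompleteLattice

/-- A complete lattice equipped with a commutator operation, axiomatizing the congruence
lattice of an algebra in a semidegenerate congruence-modular variety whose compact
congruences are closed under the commutator. -/
class CommutatorLattice (C : Type*) [CompleteLattice C] where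
  comm : C → C → C
  comm_comm : ∀ a b : C, comm a b = comm b a
  comm_sSup : ∀ (s : Set C) (b : C), comm (sSup s) b = ⨆ a ∈ s, comm a b
  comm_le_inf : ∀ a b : C, comm a b ≤ a ⊓ b
  comm_top : ∀ a : C, comm a ⊤ = a
  compactlyGenerated : ∀ x : C,
    ∃ s : Set C, (∀ a ∈ s, IsCompactElement a) ∧ sSup s = x
  top_isCompact : IsCompactElement (⊤ : C)
  comm_isCompact : ∀ a b : C, IsCompactElement a → IsCompactElement b →
    IsCompactElement (comm a b)

namespace CommutatorLattice

variable {C : Type*} [CompleteLattice C] [CommutatorLattice C]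

/-- The residuation `a → b := ⨆ {c | [a,c] ≤ b}`. -/
def resid (a b : C) : C := sSup {c : C | comm a c ≤ b}

/-- The annihilator `a⊥ := a → ⊥`. -/
def ann (a : C) : C := resid a ⊥

/-- Iterated commutator: `cpow a n = [a,a]^n`, with the convention `[a,a]^0 = a`.
Note that `[a,b]^n` for `n ≥ 1` equals `cpow (comm a b) (n-1)`. -/
def cpow (a : C) : ℕ → C
  | 0 => a
  | n + 1 => comm (cpow a n) (cpow a n)

/-- Prime elements: `p ≠ ⊤` and `[a,b] ≤ p` implies `a ≤ p` or `b ≤ p`. -/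
def IsPrime (p : C) : Prop := p ≠ ⊤ ∧ ∀ a b : C, comm a b ≤ p → a ≤ p ∨ b ≤ p

/-- The radical `ρ(a) := ⨅ {p prime | a ≤ p}`. -/
def radical (a : C) : C := sInf {p : C | IsPrime p ∧ a ≤ p}

variable (C) in
/-- `C` is semiprime if `ρ(⊥) = ⊥`. -/
def Semiprime : Prop := radical (⊥ : C) = ⊥

variable (C) in
/-- Condition (⋆): for all compact `a`, `b` and all `n ≥ 1` there is `m ≥ 0` with
`[[a,a]^m, [b,b]^m] ≤ [a,b]^n`.  Here `cpow (comm a b) n = [a,b]^(n+1)`, so `n : ℕ`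
ranges exactly over the exponents `≥ 1` of the paper. -/
def Star : Prop := ∀ a b : C, IsCompactElement a → IsCompactElement b →
  ∀ n : ℕ, ∃ m : ℕ, comm (cpow a m) (cpow b m) ≤ cpow (comm a b) n

/-- Pure elements: `t ⊔ a⊥ = ⊤` for every compact `a ≤ t`. -/
def IsPure (t : C) : Prop := ∀ a : C, IsCompactElement a → a ≤ t → t ⊔ ann a = ⊤

/-- w-pure elements: `t ⊔ (a → ρ(⊥)) = ⊤` for every compact `a ≤ t`. -/
def IsWPure (t : C) : Prop :=
  ∀ a : C, IsCompactElement a → a ≤ t → t ⊔ resid a (radical ⊥) = ⊤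

/-- Complemented elements. -/
def IsComplEl (a : C) : Prop := ∃ b : C, a ⊔ b = ⊤ ∧ a ⊓ b = ⊥

/-- Regular elements: joins of sets of complemented elements. -/
def IsRegular (t : C) : Prop := ∃ S : Set C, (∀ a ∈ S, IsComplEl a) ∧ t = sSup S

/-- Max-regular elements: maximal among regular elements distinct from `⊤`. -/
def IsMaxRegular (t : C) : Prop :=
  IsRegular t ∧ t ≠ ⊤ ∧ ∀ u : C, IsRegular u → u ≠ ⊤ → t ≤ u → u = t

/-- Maximal elements of `C \ {⊤}`. -/
def IsMaximal (p : C) : Prop := p ≠ ⊤ ∧ ∀ q : C, q ≠ ⊤ → p ≤ q → q = p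

/-- Minimal primes. -/
def IsMinPrime (p : C) : Prop := IsPrime p ∧ ∀ q : C, IsPrime q → q ≤ p → q = p

variable (C) in
/-- `C` is mp if every prime lies above a unique minimal prime. -/
def MP : Prop := ∀ p : C, IsPrime p → ∃! q : C, IsMinPrime q ∧ q ≤ p

variable (C) in
/-- `C` is PF if `a⊥` is pure for every compact `a`. -/
def PF : Prop := ∀ a : C, IsCompactElement a → IsPure (ann a)

variable (C) in
/-- `C` is PP if `a⊥` is complemented for every compact `a`. -/
def PP : Prop := ∀ a : C, IsCompactElement a → IsComplEl (ann a)

/-- `O(p) := ⨆ {a compact | a⊥ ≰ p}`. -/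
def O (p : C) : C := sSup {a : C | IsCompactElement a ∧ ¬ ann a ≤ p}

variable (C) in
/-- `C` is normal. -/
def Normal : Prop := ∀ t u : C, t ⊔ u = ⊤ →
  ∃ a b : C, t ⊔ a = ⊤ ∧ u ⊔ b = ⊤ ∧ comm a b = ⊥

variable (C) in
/-- `C` is B-normal. -/
def BNormal : Prop := ∀ t u : C, t ⊔ u = ⊤ →
  ∃ a b : C, IsComplEl a ∧ IsComplEl b ∧ t ⊔ a = ⊤ ∧ u ⊔ b = ⊤ ∧ comm a b = ⊥

variable (C) in
/-- `C` is purified. -/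
def Purified : Prop := ∀ p q : C, IsMinPrime p → IsMinPrime q → p ≠ q →
  ∃ a : C, IsComplEl a ∧ a ≤ p ∧ ann a ≤ q

variable (C) in
/-- The prime spectrum of `C`. -/
abbrev Spec := {p : C // IsPrime p}

variable (C) in
/-- The Zariski topology on `Spec C`: the closed sets are the `V(t) = {p | t ≤ p}`,
equivalently the topology generated by the sets `D(t) = {p | t ≰ p}`. -/
def zariskiTop : TopologicalSpace (Spec C) :=
  TopologicalSpace.generateFrom {U : Set (Spec C) | ∃ t : C, U = {p : Spec C | ¬ t ≤ p.1}}

variable (C) in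
/-- The flat topology on `Spec C`: generated by the open basis `V(a)`, `a` compact. -/
def flatTop : TopologicalSpace (Spec C) :=
  TopologicalSpace.generateFrom
    {U : Set (Spec C) | ∃ a : C, IsCompactElement a ∧ U = {p : Spec C | a ≤ p.1}}

section Helpers

variable {C : Type*} [CompleteLattice C] [CommutatorLattice C]

lemma comm_sup_left' (a b c : C) : comm (a ⊔ b) c = comm a c ⊔ comm b c := by
  rw [← sSup_pair, comm_sSup, iSup_pair]

lemma comm_le_left' (a b : C) : comm a b ≤ a := (comm_le_inf a b).trans inf_le_left

lemma comm_le_right' (a b : C) : comm a b ≤ b := (comm_le_inf a b).trans inf_le_right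

lemma comm_mono' {a a' b b' : C} (ha : a ≤ a') (hb : b ≤ b') : comm a b ≤ comm a' b' := by
  have h1 : comm a b ≤ comm a' b := by
    have h := comm_sup_left' a a' b
    rw [sup_eq_right.2 ha] at h
    rw [h]; exact le_sup_left
  refine h1.trans ?_
  rw [comm_comm a' b, comm_comm a' b']
  have h := comm_sup_left' b b' a'
  rw [sup_eq_right.2 hb] at h
  rw [h]; exact le_sup_left

lemma comm_sup_sup_le' (d x y : C) : comm (d ⊔ x) (d ⊔ y) ≤ d ⊔ comm x y := by
  rw [comm_sup_left']
  refine sup_le (le_sup_of_le_left (comm_le_left' _ _)) ?_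
  rw [comm_comm, comm_sup_left']
  refine sup_le (le_sup_of_le_left (comm_le_left' _ _)) ?_
  rw [comm_comm]; exact le_sup_right

lemma sup_comm_top' {t a b : C} (ha : t ⊔ a = ⊤) (hb : t ⊔ b = ⊤) : t ⊔ comm a b = ⊤ := by
  rw [eq_top_iff]
  calc (⊤ : C) = comm (t ⊔ a) (t ⊔ b) := by rw [ha, hb, comm_top]
  _ ≤ t ⊔ comm a b := comm_sup_sup_le' t a b

lemma cpow_isCompact' {a : C} (h : IsCompactElement a) : ∀ n, IsCompactElement (cpow a n)
  | 0 => h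
  | n + 1 => comm_isCompact _ _ (cpow_isCompact' h n) (cpow_isCompact' h n)

lemma cpow_succ_le' (a : C) (n : ℕ) : cpow a (n + 1) ≤ cpow a n := comm_le_left' _ _

lemma cpow_antitone' {a : C} {m n : ℕ} (h : m ≤ n) : cpow a n ≤ cpow a m := by
  induction h with
  | refl => exact le_rfl
  | step _ ih => exact (cpow_succ_le' a _).trans ih

lemma sup_cpow_top' {t a : C} (h : t ⊔ a = ⊤) : ∀ n, t ⊔ cpow a n = ⊤
  | 0 => h
  | n + 1 => sup_comm_top' (sup_cpow_top' h n) (sup_cpow_top' h n)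

/-- From `c ⊔ t0 = ⊤` extract a compact `a ≤ c` with `t0 ⊔ a = ⊤`. -/
lemma exists_compact_sup_top' {c t0 : C} (h : c ⊔ t0 = ⊤) :
    ∃ a : C, IsCompactElement a ∧ a ≤ c ∧ t0 ⊔ a = ⊤ := by
  classical
  obtain ⟨s, hs, hsup⟩ := compactlyGenerated c
  have htop : (⊤ : C) ≤ sSup (insert t0 s) := by
    rw [sSup_insert, hsup, sup_comm t0 c]
    exact h.ge
  obtain ⟨F, hF, hle⟩ := (isCompactElement_iff_exists_le_sSup_of_le_sSup C ⊤).1 (top_isCompact (C := C)) _ htop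
  refine ⟨(F.erase t0).sup id, ?_, ?_, ?_⟩
  · refine isCompactElement_finsetSup _ (fun x hx => ?_)
    have hx' := Finset.mem_erase.1 hx
    rcases Set.mem_insert_iff.1 (hF hx'.2) with h1 | h1
    · exact absurd h1 hx'.1
    · exact hs x h1
  · refine Finset.sup_le (fun x hx => ?_)
    have hx' := Finset.mem_erase.1 hx
    rcases Set.mem_insert_iff.1 (hF hx'.2) with h1 | h1
    · exact absurd h1 hx'.1
    · exact hsup ▸ le_sSup h1
  · rw [eq_top_iff]
    refine hle.trans (Finset.sup_le (fun x hx => ?_))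
    by_cases hxt : x = t0
    · exact hxt ▸ le_sup_left
    · exact le_sup_of_le_right (Finset.le_sup (Finset.mem_erase.2 ⟨hxt, hx⟩))

lemma exists_compact_pair' {t u : C} (h : t ⊔ u = ⊤) :
    ∃ t0 u0 : C, IsCompactElement t0 ∧ IsCompactElement u0 ∧
      t0 ≤ t ∧ u0 ≤ u ∧ t0 ⊔ u0 = ⊤ := by
  obtain ⟨t0, ht0c, ht0t, ht0⟩ := exists_compact_sup_top' h
  obtain ⟨u0, hu0c, hu0u, hu0⟩ := exists_compact_sup_top' ht0
  exact ⟨t0, u0, ht0c, hu0c, ht0t, hu0u, hu0⟩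

lemma exists_maximal_above' {c : C} (h : c ≠ ⊤) : ∃ m : C, IsMaximal m ∧ c ≤ m := by
  have hchainub : ∀ ch ⊆ {e : C | e ≠ ⊤}, IsChain (· ≤ ·) ch → ∀ y ∈ ch,
      ∃ ub ∈ {e : C | e ≠ ⊤}, ∀ z ∈ ch, z ≤ ub := by
    intro ch hch hchain y hy
    refine ⟨sSup ch, ?_, fun z hz => le_sSup hz⟩
    intro htop
    obtain ⟨x, hx, hlex⟩ := (isCompactElement_iff_le_of_directed_sSup_le C ⊤).1
      (top_isCompact) ch ⟨y, hy⟩ hchain.directedOn htop.ge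
    exact hch hx (top_le_iff.1 hlex)
  obtain ⟨m, hcm, hmax⟩ := zorn_le_nonempty₀ {e : C | e ≠ ⊤} hchainub c h
  exact ⟨m, ⟨hmax.1, fun q hq hmq => le_antisymm (hmax.2 hq hmq) hmq⟩, hcm⟩

/-- Zorn argument: a prime element above `c0` avoiding an "m-system" `S`. -/
lemma exists_prime_avoiding' {S : Set C} (hcpt : ∀ s ∈ S, IsCompactElement s)
    (hcl : ∀ s1 ∈ S, ∀ s2 ∈ S, ∃ s3 ∈ S, s3 ≤ comm s1 s2)
    (hne : S.Nonempty) {c0 : C} (h0 : ∀ s ∈ S, ¬ s ≤ c0) :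
    ∃ d : C, c0 ≤ d ∧ (∀ s ∈ S, ¬ s ≤ d) ∧ IsPrime d := by
  have hchainub : ∀ ch ⊆ {e : C | ∀ s ∈ S, ¬ s ≤ e}, IsChain (· ≤ ·) ch → ∀ y ∈ ch,
      ∃ ub ∈ {e : C | ∀ s ∈ S, ¬ s ≤ e}, ∀ z ∈ ch, z ≤ ub := by
    intro ch hch hchain y hy
    refine ⟨sSup ch, ?_, fun z hz => le_sSup hz⟩
    intro s hs hle
    obtain ⟨x, hx, hlex⟩ := (isCompactElement_iff_le_of_directed_sSup_le C s).1
      (hcpt s hs) ch ⟨y, hy⟩ hchain.directedOn hle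
    exact hch hx s hs hlex
  obtain ⟨d, hcd, hd⟩ := zorn_le_nonempty₀ {e : C | ∀ s ∈ S, ¬ s ≤ e} hchainub c0 h0
  · have hdS : ∀ s ∈ S, ¬ s ≤ d := hd.1
    have hdne : d ≠ ⊤ := by
      obtain ⟨s, hs⟩ := hne
      intro h; exact hdS s hs (h ▸ le_top)
    refine ⟨d, hcd, hdS, hdne, ?_⟩
    intro x y hxy
    by_contra hcon
    push_neg at hcon
    obtain ⟨hx, hy⟩ := hcon
    have h1 : ∃ s1 ∈ S, s1 ≤ d ⊔ x := by
      by_contra hc; push_neg at hc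
      exact hx (le_sup_right.trans (hd.2 hc le_sup_left))
    have h2 : ∃ s2 ∈ S, s2 ≤ d ⊔ y := by
      by_contra hc; push_neg at hc
      exact hy (le_sup_right.trans (hd.2 hc le_sup_left))
    obtain ⟨s1, hs1, hle1⟩ := h1
    obtain ⟨s2, hs2, hle2⟩ := h2
    obtain ⟨s3, hs3, hle3⟩ := hcl s1 hs1 s2 hs2
    refine hdS s3 hs3 (hle3.trans ?_)
    refine ((comm_mono' hle1 hle2).trans (comm_sup_sup_le' d x y)).trans ?_
    exact sup_le le_rfl hxy

lemma IsMaximal.isPrime' {m : C} (hm : IsMaximal m) : IsPrime m := by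
  refine ⟨hm.1, fun a b hab => ?_⟩
  by_contra h
  push_neg at h
  have ha : m ⊔ a = ⊤ := by
    by_contra h'
    exact h.1 (le_sup_right.trans (hm.2 _ h' le_sup_left).le)
  have hb : m ⊔ b = ⊤ := by
    by_contra h'
    exact h.2 (le_sup_right.trans (hm.2 _ h' le_sup_left).le)
  have hh : m ⊔ comm a b = ⊤ := sup_comm_top' ha hb
  rw [sup_eq_left.2 hab] at hh
  exact hm.1 hh

lemma zariski_open_down' {U : Set (Spec C)} (hU : (zariskiTop C).IsOpen U) :
    ∀ p q : Spec C, p.1 ≤ q.1 → q ∈ U → p ∈ U := by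
  have hU' : TopologicalSpace.GenerateOpen
      {U : Set (Spec C) | ∃ t : C, U = {p : Spec C | ¬ t ≤ p.1}} U := hU
  clear hU
  induction hU' with
  | basic V hV =>
    obtain ⟨t, rfl⟩ := hV
    intro p q hpq hq ht
    exact hq (ht.trans hpq)
  | univ => intro p q _ _; trivial
  | inter V W _ _ ihV ihW =>
    intro p q hpq hq
    exact ⟨ihV p q hpq hq.1, ihW p q hpq hq.2⟩
  | sUnion T _ ihT =>
    rintro p q hpq ⟨V, hV, hqV⟩
    exact ⟨V, hV, ihT V hV p q hpq hqV⟩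

end Helpers

/-- Binary commutator words with leaves labelled by pairs. -/
inductive CTree (C : Type*) where
  | leaf : C → C → CTree C
  | node : CTree C → CTree C → CTree C

section Trees

variable {C : Type*} [CompleteLattice C] [CommutatorLattice C]

/-- Evaluation of a commutator word. -/
def CTree.eval : CTree C → C
  | .leaf a b => comm a b
  | .node l r => comm (CTree.eval l) (CTree.eval r)

/-- The list of leaf pairs of a commutator word. -/
def CTree.leaves : CTree C → List (C × C)
  | .leaf a b => [(a, b)]
  | .node l r => CTree.leaves l ++ CTree.leaves r

lemma CTree.eval_isCompact (tr : CTree C)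
    (h : ∀ x ∈ tr.leaves, IsCompactElement x.1 ∧ IsCompactElement x.2) :
    IsCompactElement tr.eval := by
  induction tr with
  | leaf a b =>
    have := h (a, b) (by simp [CTree.leaves])
    exact comm_isCompact _ _ this.1 this.2
  | node l r ihl ihr =>
    refine comm_isCompact _ _ (ihl ?_) (ihr ?_) <;>
      intro x hx <;> exact h x (by simp [CTree.leaves, hx])

lemma CTree.eval_not_le (tr : CTree C) {p : C} (hp : IsPrime p)
    (h : ∀ x ∈ tr.leaves, ¬ comm x.1 x.2 ≤ p) : ¬ tr.eval ≤ p := by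
  induction tr with
  | leaf a b => exact h (a, b) (by simp [CTree.leaves])
  | node l r ihl ihr =>
    intro hle
    have hl : ¬ CTree.eval l ≤ p := ihl (fun x hx => h x (by simp [CTree.leaves, hx]))
    have hr : ¬ CTree.eval r ≤ p := ihr (fun x hx => h x (by simp [CTree.leaves, hx]))
    rcases hp.2 _ _ hle with h' | h'
    · exact hl h'
    · exact hr h'

lemma foldr_comm_le {l : List C} {x : C} (hx : x ∈ l) : l.foldr comm ⊤ ≤ x := by
  induction l with
  | nil => cases hx
  | cons y ys ih =>
    rcases List.mem_cons.1 hx with rfl | h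
    · exact comm_le_left' _ _
    · exact (comm_le_right' _ _).trans (ih h)

lemma foldr_comm_mem {A : Set C} (htop : (⊤ : C) ∈ A)
    (hcl : ∀ a ∈ A, ∀ b ∈ A, comm a b ∈ A) :
    ∀ l : List C, (∀ x ∈ l, x ∈ A) → l.foldr comm ⊤ ∈ A
  | [], _ => htop
  | x :: xs, h =>
    hcl x (h x (by simp)) _
      (foldr_comm_mem htop hcl xs (fun y hy => h y (by simp [hy])))

end Trees

section MainLemmas

variable {C : Type*} [CompleteLattice C] [CommutatorLattice C]

lemma cpow_succ' (a : C) (n : ℕ) :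
    cpow a (n + 1) = comm (cpow a n) (cpow a n) := rfl

lemma normal_imp_two (hN : Normal C) :
    ∀ p q : C, IsMaximal p → IsMaximal q → p ≠ q →
      ∃ a b : C, IsCompactElement a ∧ IsCompactElement b ∧
        ¬ a ≤ p ∧ ¬ b ≤ q ∧ comm a b = ⊥ := by
  intro p q hp hq hpq
  have hpq_top : p ⊔ q = ⊤ := by
    by_contra h
    have h1 : p ⊔ q = p := hp.2 _ h le_sup_left
    exact hpq (hq.2 p hp.1 (le_sup_right.trans h1.le))
  obtain ⟨a', b', ha', hb', hab⟩ := hN p q hpq_top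
  obtain ⟨a, hac, haa, hpa⟩ := exists_compact_sup_top' (c := a') (t0 := p)
    (by rw [sup_comm]; exact ha')
  obtain ⟨b, hbc, hbb, hqb⟩ := exists_compact_sup_top' (c := b') (t0 := q)
    (by rw [sup_comm]; exact hb')
  refine ⟨a, b, hac, hbc, ?_, ?_, ?_⟩
  · intro h; exact hp.1 (by rwa [sup_eq_left.2 h] at hpa)
  · intro h; exact hq.1 (by rwa [sup_eq_left.2 h] at hqb)
  · exact le_bot_iff.1 (hab ▸ comm_mono' haa hbb)

lemma two_imp_three
    (h : ∀ p q : C, IsMaximal p → IsMaximal q → p ≠ q →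
      ∃ a b : C, IsCompactElement a ∧ IsCompactElement b ∧
        ¬ a ≤ p ∧ ¬ b ≤ q ∧ comm a b = ⊥) :
    ∀ p q : Spec C, IsMaximal p.1 → IsMaximal q.1 → p ≠ q →
      ∃ U V : Set (Spec C), (zariskiTop C).IsOpen U ∧ (zariskiTop C).IsOpen V ∧
        p ∈ U ∧ q ∈ V ∧ U ∩ V = ∅ := by
  intro p q hp hq hpq
  obtain ⟨a, b, _, _, hap, hbq, hab⟩ := h p.1 q.1 hp hq (fun h' => hpq (Subtype.ext h'))
  refine ⟨{r : Spec C | ¬ a ≤ r.1}, {r : Spec C | ¬ b ≤ r.1}, ?_, ?_, hap, hbq, ?_⟩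
  · exact TopologicalSpace.isOpen_generateFrom_of_mem ⟨a, rfl⟩
  · exact TopologicalSpace.isOpen_generateFrom_of_mem ⟨b, rfl⟩
  · ext r
    simp only [Set.mem_inter_iff, Set.mem_setOf_eq, Set.mem_empty_iff_false, iff_false]
    rintro ⟨h1, h2⟩
    rcases r.2.2 a b (hab.le.trans bot_le) with h' | h'
    · exact h1 h'
    · exact h2 h'

lemma three_imp_four
    (h3 : ∀ p q : Spec C, IsMaximal p.1 → IsMaximal q.1 → p ≠ q →
      ∃ U V : Set (Spec C), (zariskiTop C).IsOpen U ∧ (zariskiTop C).IsOpen V ∧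
        p ∈ U ∧ q ∈ V ∧ U ∩ V = ∅) :
    ∀ p : C, IsPrime p → ∃! q : C, IsMaximal q ∧ p ≤ q := by
  intro p hp
  obtain ⟨m, hm, hpm⟩ := exists_maximal_above' hp.1
  refine ⟨m, ⟨hm, hpm⟩, ?_⟩
  rintro q ⟨hq, hpq⟩
  by_contra hne
  obtain ⟨U, V, hU, hV, hqU, hmV, hUV⟩ :=
    h3 ⟨q, hq.isPrime'⟩ ⟨m, hm.isPrime'⟩ hq hm (fun h' => hne (congrArg Subtype.val h'))
  have h1 := zariski_open_down' hU ⟨p, hp⟩ ⟨q, hq.isPrime'⟩ hpq hqU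
  have h2 := zariski_open_down' hV ⟨p, hp⟩ ⟨m, hm.isPrime'⟩ hpm hmV
  have hmem : (⟨p, hp⟩ : Spec C) ∈ U ∩ V := ⟨h1, h2⟩
  rw [hUV] at hmem
  exact Set.notMem_empty _ hmem

lemma four_imp_normal (hstar : Star C)
    (h4 : ∀ p : C, IsPrime p → ∃! q : C, IsMaximal q ∧ p ≤ q) : Normal C := by
  intro t u htu
  obtain ⟨t0, u0, ht0c, hu0c, ht0t, hu0u, h0⟩ := exists_compact_pair' htu
  set A : Set C := {a | IsCompactElement a ∧ t0 ⊔ a = ⊤} with hA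
  set B : Set C := {b | IsCompactElement b ∧ u0 ⊔ b = ⊤} with hB
  have htopA : (⊤ : C) ∈ A := ⟨top_isCompact, sup_top_eq _⟩
  have htopB : (⊤ : C) ∈ B := ⟨top_isCompact, sup_top_eq _⟩
  have hclA : ∀ a ∈ A, ∀ b ∈ A, comm a b ∈ A := fun a ha b hb =>
    ⟨comm_isCompact _ _ ha.1 hb.1, sup_comm_top' ha.2 hb.2⟩
  have hclB : ∀ a ∈ B, ∀ b ∈ B, comm a b ∈ B := fun a ha b hb =>
    ⟨comm_isCompact _ _ ha.1 hb.1, sup_comm_top' ha.2 hb.2⟩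
  have hu0A : u0 ∈ A := ⟨hu0c, h0⟩
  have ht0B : t0 ∈ B := ⟨ht0c, by rwa [sup_comm] at h0⟩
  -- Main claim: some commutator of a pair from `A × B` lies below every prime.
  have goal1 : ∃ a ∈ A, ∃ b ∈ B, ∀ p : C, IsPrime p → comm a b ≤ p := by
    by_cases hcase : ∃ L : List (C × C), (∀ x ∈ L, x.1 ∈ A ∧ x.2 ∈ B) ∧
        ∀ p : C, IsPrime p → ∃ x ∈ L, comm x.1 x.2 ≤ p
    · obtain ⟨L, hL, hcov⟩ := hcase
      refine ⟨(L.map Prod.fst).foldr comm ⊤, ?_, (L.map Prod.snd).foldr comm ⊤, ?_, ?_⟩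
      · refine foldr_comm_mem htopA hclA _ ?_
        rintro x hx
        obtain ⟨y, hy, rfl⟩ := List.mem_map.1 hx
        exact (hL y hy).1
      · refine foldr_comm_mem htopB hclB _ ?_
        rintro x hx
        obtain ⟨y, hy, rfl⟩ := List.mem_map.1 hx
        exact (hL y hy).2
      · intro p hp
        obtain ⟨x, hxL, hxle⟩ := hcov p hp
        rcases hp.2 _ _ hxle with h' | h'
        · exact (comm_le_left' _ _).trans
            ((foldr_comm_le (List.mem_map_of_mem (f := Prod.fst) hxL)).trans h')
        · exact (comm_le_right' _ _).trans
            ((foldr_comm_le (List.mem_map_of_mem (f := Prod.snd) hxL)).trans h')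
    · exfalso
      push_neg at hcase
      set S : Set C :=
        {c | ∃ tr : CTree C, (∀ x ∈ tr.leaves, x.1 ∈ A ∧ x.2 ∈ B) ∧ tr.eval = c} with hS
      have hScpt : ∀ s ∈ S, IsCompactElement s := by
        rintro s ⟨tr, htr, rfl⟩
        exact tr.eval_isCompact (fun x hx => ⟨(htr x hx).1.1, (htr x hx).2.1⟩)
      have hScl : ∀ s1 ∈ S, ∀ s2 ∈ S, ∃ s3 ∈ S, s3 ≤ comm s1 s2 := by
        rintro s1 ⟨tr1, h1, rfl⟩ s2 ⟨tr2, h2, rfl⟩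
        refine ⟨comm tr1.eval tr2.eval, ⟨tr1.node tr2, ?_, rfl⟩, le_rfl⟩
        intro x hx
        rcases List.mem_append.1 hx with h' | h'
        · exact h1 x h'
        · exact h2 x h'
      have hSne : S.Nonempty :=
        ⟨comm ⊤ ⊤, ⟨CTree.leaf ⊤ ⊤, by
          intro x hx
          simp only [CTree.leaves, List.mem_singleton] at hx
          subst hx
          exact ⟨htopA, htopB⟩, rfl⟩⟩
      have hbot : ∀ s ∈ S, ¬ s ≤ (⊥ : C) := by
        rintro s ⟨tr, htr, rfl⟩ hle
        obtain ⟨p, hp, hpavoid⟩ := hcase tr.leaves htr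
        exact tr.eval_not_le hp hpavoid (hle.trans bot_le)
      obtain ⟨d, -, hdS, hdprime⟩ := exists_prime_avoiding' hScpt hScl hSne hbot
      have hclaim : d ⊔ t0 = ⊤ ∨ d ⊔ u0 = ⊤ := by
        by_contra hcc
        push_neg at hcc
        obtain ⟨m1, hm1, hm1le⟩ := exists_maximal_above' hcc.1
        obtain ⟨m2, hm2, hm2le⟩ := exists_maximal_above' hcc.2
        obtain ⟨q, -, hq⟩ := h4 d hdprime
        have e1 : m1 = q := hq m1 ⟨hm1, le_sup_left.trans hm1le⟩
        have e2 : m2 = q := hq m2 ⟨hm2, le_sup_left.trans hm2le⟩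
        have hle : t0 ⊔ u0 ≤ q :=
          sup_le (e1 ▸ le_sup_right.trans hm1le) (e2 ▸ le_sup_right.trans hm2le)
        exact (e1 ▸ hm1.1) (top_le_iff.1 (h0 ▸ hle))
      rcases hclaim with hc | hc
      · obtain ⟨a, hac, had, ha⟩ := exists_compact_sup_top' hc
        refine hdS (comm a t0) ⟨CTree.leaf a t0, ?_, rfl⟩ ((comm_le_left' _ _).trans had)
        intro x hx
        simp only [CTree.leaves, List.mem_singleton] at hx
        subst hx
        exact ⟨⟨hac, ha⟩, ht0B⟩
      · obtain ⟨b, hbc, hbd, hb⟩ := exists_compact_sup_top' hc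
        refine hdS (comm u0 b) ⟨CTree.leaf u0 b, ?_, rfl⟩ ((comm_le_right' _ _).trans hbd)
        intro x hx
        simp only [CTree.leaves, List.mem_singleton] at hx
        subst hx
        exact ⟨hu0A, ⟨hbc, hb⟩⟩
  obtain ⟨a, haA, b, hbB, hab⟩ := goal1
  have hcbot : ∃ n, cpow (comm a b) n = ⊥ := by
    by_contra hcc
    push_neg at hcc
    set S' : Set C := {e | ∃ n : ℕ, cpow (comm a b) n = e} with hS'
    have h1 : ∀ s ∈ S', IsCompactElement s := by
      rintro s ⟨n, rfl⟩
      exact cpow_isCompact' (comm_isCompact _ _ haA.1 hbB.1) n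
    have h2 : ∀ s1 ∈ S', ∀ s2 ∈ S', ∃ s3 ∈ S', s3 ≤ comm s1 s2 := by
      rintro s1 ⟨n1, rfl⟩ s2 ⟨n2, rfl⟩
      refine ⟨cpow (comm a b) (max n1 n2 + 1), ⟨_, rfl⟩, ?_⟩
      rw [cpow_succ']
      exact comm_mono' (cpow_antitone' (le_max_left n1 n2))
        (cpow_antitone' (le_max_right n1 n2))
    have h3 : S'.Nonempty := ⟨comm a b, 0, rfl⟩
    have h4' : ∀ s ∈ S', ¬ s ≤ (⊥ : C) := by
      rintro s ⟨n, rfl⟩ hle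
      exact hcc n (le_bot_iff.1 hle)
    obtain ⟨d, -, hdS, hdprime⟩ := exists_prime_avoiding' h1 h2 h3 h4'
    exact hdS (comm a b) ⟨0, rfl⟩ (hab d hdprime)
  obtain ⟨n, hn⟩ := hcbot
  obtain ⟨m, hm⟩ := hstar a b haA.1 hbB.1 n
  refine ⟨cpow a m, cpow b m, ?_, ?_, ?_⟩
  · have h := sup_cpow_top' haA.2 m
    rw [eq_top_iff, ← h]
    exact sup_le_sup_right ht0t _
  · have h := sup_cpow_top' hbB.2 m
    rw [eq_top_iff, ← h]
    exact sup_le_sup_right hu0u _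
  · exact le_bot_iff.1 (hn ▸ hm)

end MainLemmas

theorem statement7 :
    (Normal C →
      ∀ p q : C, IsMaximal p → IsMaximal q → p ≠ q →
        ∃ a b : C, IsCompactElement a ∧ IsCompactElement b ∧
          ¬ a ≤ p ∧ ¬ b ≤ q ∧ comm a b = ⊥) ∧
    ((∀ p q : C, IsMaximal p → IsMaximal q → p ≠ q →
        ∃ a b : C, IsCompactElement a ∧ IsCompactElement b ∧
          ¬ a ≤ p ∧ ¬ b ≤ q ∧ comm a b = ⊥) →
      ∀ p q : Spec C, IsMaximal p.1 → IsMaximal q.1 → p ≠ q →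
        ∃ U V : Set (Spec C), (zariskiTop C).IsOpen U ∧ (zariskiTop C).IsOpen V ∧
          p ∈ U ∧ q ∈ V ∧ U ∩ V = ∅) ∧
    ((∀ p q : Spec C, IsMaximal p.1 → IsMaximal q.1 → p ≠ q →
        ∃ U V : Set (Spec C), (zariskiTop C).IsOpen U ∧ (zariskiTop C).IsOpen V ∧
          p ∈ U ∧ q ∈ V ∧ U ∩ V = ∅) →
      ∀ p : C, IsPrime p → ∃! q : C, IsMaximal q ∧ p ≤ q) ∧
    (Star C →
      (∀ p : C, IsPrime p → ∃! q : C, IsMaximal q ∧ p ≤ q) → Normal C) :=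
  ⟨normal_imp_two, two_imp_three, three_imp_four, fun hs h4 => four_imp_normal hs h4⟩

end CommutatorLattice
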